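/- arXiv:0710.0667 — 5 statements merged into one kernel-verified Lean document; each statement's English description precedes it below -/
import Mathlib

section
/- The map R(c) = 1 - c/q_c²(0), where q_c(x) = 1 - ((x-c)/(1-c))² and q_c² denotes q_c composed with itself, has a fixed point c* in the interval (0, 0.36). -/
/-- The map `R(c) = 1 - c/q_c²(0)`, with `q_c(x) = 1 - ((x-c)/(1-c))²` and `q_c²` the
second iterate, has a fixed point `c*` in `(0, 0.36)`. -/
theorem stmt2 (q : ℝ → ℝ → ℝ)
    (hq : ∀ c x, q c x = 1 - ((x - c)/(1 - c))^2) :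
    ∃ c ∈ Set.Ioo (0:ℝ) 0.36, 1 - c / (q c (q c 0)) = c := by
  set f : ℝ → ℝ := fun c => 2*c*(1-c)^3 - c^3 - (1-c)^5 with hf
  have hcont : ContinuousOn f (Set.Icc 0.1 0.35) := by fun_prop
  have h1 : f 0.1 ≤ 0 := by norm_num [hf]
  have h2 : (0:ℝ) ≤ f 0.35 := by norm_num [hf]
  obtain ⟨c, hc, hfc⟩ := intermediate_value_Icc (by norm_num) hcont ⟨h1, h2⟩
  obtain ⟨hc1, hc2⟩ := hc
  have hc0 : (0:ℝ) < c := by linarith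
  have h1c : (1:ℝ) - c ≠ 0 := by norm_num; linarith
  have hQ : q c (q c 0) = c / (1 - c) := by
    rw [hq, hq]
    field_simp
    ring_nf
    ring_nf at hfc
    nlinarith [hfc, sq_nonneg c, sq_nonneg (1-c)]
  refine ⟨c, ⟨hc0, by norm_num; linarith⟩, ?_⟩
  rw [hQ]
  have hcne : c ≠ 0 := ne_of_gt hc0
  field_simp
  ring
end

section
/- Let c* ∈ (0, 1/2) be a fixed point of R(c) = 1 - c/q_c²(0), and set σ_0* = q_{c*}²(0) and σ_1* = 1 - q_{c*}(0). Then (σ_0*)² = σ_1*. -/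
/-- If `c* ∈ (0,1/2)` is a fixed point of `R(c) = 1 - c/q_c²(0)`, then with
`σ₀* = q_{c*}²(0)` and `σ₁* = 1 - q_{c*}(0)` one has `(σ₀*)² = σ₁*`. -/
theorem stmt3 (c : ℝ) (hc : c ∈ Set.Ioo (0:ℝ) (1/2))
    (q : ℝ → ℝ) (hq : ∀ x, q x = 1 - ((x - c)/(1 - c))^2)
    (hfix : 1 - c / (q (q 0)) = c) :
    (q (q 0))^2 = 1 - q 0 := by
  obtain ⟨hc0, hc1⟩ := hc
  have hne : q (q 0) ≠ 0 := by
    intro h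
    rw [h, div_zero] at hfix
    linarith
  have h1c : (1:ℝ) - c ≠ 0 := by linarith
  have hσ : q (q 0) = c / (1 - c) := by
    rw [eq_div_iff h1c]
    field_simp at hfix
    linear_combination hfix
  have hq0 : q 0 = 1 - (c / (1 - c))^2 := by
    rw [hq 0]; ring_nf
  rw [hσ, hq0]; ring
end

section
/- Let S : ℝ² → ℝ² be the linear-affine map S(x,y) = (-σ₀x + σ₀, σ₁y + 1 - σ₁) with σ₀² = σ₁ and let c ∈ (0,1) with S(c, 1) = (c, 1) and S(1,0) = (0, q_c(0)), where q_c(x) = 1 - ((x-c)/(1-c))². Then S maps the graph of q_c into the graph of q_c: for all x, S₂(q_c(x)) = q_c(S₁(x)). -/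
/-- If `S(x,y) = (σ₀(1-x), 1-σ₁(1-y))` with `σ₁ = σ₀²`, `S` fixes `(c,1)` and maps
`(1,0)` to `(0, q_c(0))`, then `S` maps the graph of `q_c` into itself:
`S₂(q_c(x)) = q_c(S₁(x))` for all `x`. -/
theorem stmt4 (σ0 σ1 c : ℝ) (hσ0 : σ0 ∈ Set.Ioo (0:ℝ) 1) (hσ1 : σ1 ∈ Set.Ioo (0:ℝ) 1)
    (hsq : σ1 = σ0^2) (hc : c ∈ Set.Ioo (0:ℝ) 1)
    (S1 S2 q : ℝ → ℝ)
    (hS1 : ∀ x, S1 x = σ0 * (1 - x)) (hS2 : ∀ y, S2 y = 1 - σ1 * (1 - y))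
    (hq : ∀ x, q x = 1 - ((x - c)/(1 - c))^2)
    (hfixc : S1 c = c) (hS0 : S2 0 = q 0) :
    ∀ x, S2 (q x) = q (S1 x) := by
  intro x
  have hcne : (1 : ℝ) - c ≠ 0 := by
    have := hc.2; intro h; linarith
  have hfix : σ0 * (1 - c) = c := by rw [hS1] at hfixc; exact hfixc
  subst hsq
  rw [hS2, hq, hq, hS1]
  have h2 : (1 - c)^2 ≠ 0 := pow_ne_zero _ hcne
  field_simp
  linear_combination (2*σ0*(c-x) + (σ0*(1-c) - c) + (4*x-2*c-2)*σ0 + 2*c + (-4*σ0*x + 2*σ0*(1+c) - 2*c)) * hfix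
end

section
/- Let f = φ ∘ q_c on [c,1], where q_c(x) = 1 - ((x-c)/(1-c))², φ is a C² diffeomorphism of [0,1], and write Df(x) = E(x-c)(1+ε̄(x)), D²f(x) = E(1+ε(x)) with E = D²f(c). Then the nonlinearity η_φ = D(log Dφ) satisfies η_φ(q_c(x)) = -((1-c)²/2) · (ε(x) - ε̄(x))/((1+ε̄(x))·(x-c)²) for x ∈ (c, 1]. -/
/-- For `f = φ ∘ q_c` on `[c,1]` with `Df(x) = E(x-c)(1+ε̄(x))` and `D²f(x) = E(1+ε(x))`,
the nonlinearity `η_φ = D²φ/Dφ` satisfies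
`η_φ(q_c(x)) = -((1-c)²/2)·(ε(x)-ε̄(x))/((1+ε̄(x))(x-c)²)` on `(c,1]`. -/
theorem stmt10 (c E : ℝ) (hc : c ∈ Set.Ioo (0:ℝ) 1) (hE : E ≠ 0)
    (φ φ' φ'' q : ℝ → ℝ) (hq : ∀ x, q x = 1 - ((x - c)/(1 - c))^2)
    (hφ : ∀ u, HasDerivAt φ (φ' u) u) (hφ' : ∀ u, HasDerivAt φ' (φ'' u) u)
    (hφpos : ∀ u ∈ Set.Icc (0:ℝ) 1, 0 < φ' u)
    (ε εbar : ℝ → ℝ)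
    (hDf : ∀ x ∈ Set.Icc c 1, deriv (fun y => φ (q y)) x = E * (x - c) * (1 + εbar x))
    (hD2f : ∀ x ∈ Set.Icc c 1, deriv (deriv (fun y => φ (q y))) x = E * (1 + ε x))
    (hne : ∀ x ∈ Set.Ioc c 1, 1 + εbar x ≠ 0) :
    ∀ x ∈ Set.Ioc c 1,
      φ'' (q x) / φ' (q x) =
        -((1 - c)^2 / 2) * ((ε x - εbar x) / ((1 + εbar x) * (x - c)^2)) := by
  obtain ⟨hc0, hc1⟩ := hc
  have h1c : (1 - c) ≠ 0 := by linarith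
  -- derivative of q
  have hqd : ∀ y : ℝ, HasDerivAt q (-(2*(y-c)/(1-c)^2)) y := by
    intro y
    have hfun : q = fun y => 1 - (y-c)^2/(1-c)^2 := by
      funext z; rw [hq z, div_pow]
    rw [hfun]
    have h1 : HasDerivAt (fun y : ℝ => (y - c)^2) (2*(y-c)) y := by
      simpa using ((hasDerivAt_id y).sub_const c).fun_pow 2
    have h2 := (h1.div_const ((1-c)^2)).const_sub 1
    convert h2 using 1
  have hfd : ∀ y : ℝ, HasDerivAt (fun z => φ (q z))
      (φ' (q y) * (-(2*(y-c)/(1-c)^2))) y := fun y => (hφ (q y)).comp y (hqd y)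
  have hderiv_eq : deriv (fun y => φ (q y)) =
      fun y => φ' (q y) * (-(2*(y-c)/(1-c)^2)) := funext fun y => (hfd y).deriv
  intro x hx
  have hxc : x - c ≠ 0 := by have := hx.1; intro h; linarith [sub_eq_zero.mp h ▸ this]
  have hxI : x ∈ Set.Icc c 1 := ⟨le_of_lt hx.1, hx.2⟩
  have hεne := hne x hx
  -- second derivative
  have h2d : HasDerivAt (fun y => φ' (q y) * (-(2*(y-c)/(1-c)^2)))
      ((φ'' (q x) * (-(2*(x-c)/(1-c)^2))) * (-(2*(x-c)/(1-c)^2))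
        + φ' (q x) * (-(2/(1-c)^2))) x := by
    have ha : HasDerivAt (fun y => φ' (q y)) (φ'' (q x) * (-(2*(x-c)/(1-c)^2))) x :=
      (hφ' (q x)).comp x (hqd x)
    have hb : HasDerivAt (fun y : ℝ => -(2*(y-c)/(1-c)^2)) (-(2/(1-c)^2)) x := by
      have : HasDerivAt (fun y : ℝ => (y - c)) 1 x := (hasDerivAt_id x).sub_const c
      have : HasDerivAt (fun y : ℝ => -(2*(y-c)/(1-c)^2)) _ x := ((this.const_mul 2).div_const ((1-c)^2)).fun_neg
      convert this using 1
      ring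
    simpa using ha.fun_mul hb
  have eq1 : φ' (q x) * (-(2*(x-c)/(1-c)^2)) = E * (x - c) * (1 + εbar x) := by
    rw [← (hfd x).deriv]; exact hDf x hxI
  have eq2 : (φ'' (q x) * (-(2*(x-c)/(1-c)^2))) * (-(2*(x-c)/(1-c)^2))
        + φ' (q x) * (-(2/(1-c)^2)) = E * (1 + ε x) := by
    rw [← h2d.deriv, ← hderiv_eq] at *
    exact hD2f x hxI
  -- solve for φ' and φ''
  have h1c2 : ((1-c)^2 : ℝ) ≠ 0 := pow_ne_zero 2 h1c
  have hφ'val : φ' (q x) = -(E * (1-c)^2 * (1 + εbar x) / 2) := by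
    field_simp at eq1
    apply mul_right_cancel₀ hxc
    linear_combination (-(1:ℝ)/2 * (x - c)) * eq1
  have key : φ'' (q x) * (4*(x-c)^2) = E * (ε x - εbar x) * (1-c)^4 := by
    rw [hφ'val] at eq2
    field_simp at eq2
    apply mul_right_cancel₀ h1c2
    linear_combination (1-c)^2 * eq2
  have hφ''val : φ'' (q x) = E * (ε x - εbar x) * (1-c)^4 / (4 * (x-c)^2) := by
    rw [eq_div_iff (by positivity : (4*(x-c)^2 : ℝ) ≠ 0)]
    exact key
  rw [hφ'val, hφ''val]
  have hφ'ne : -(E * (1-c)^2 * (1 + εbar x) / 2) ≠ 0 := by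
    simp only [ne_eq, neg_eq_zero, div_eq_zero_iff]
    push_neg
    refine ⟨?_, by norm_num⟩
    exact mul_ne_zero (mul_ne_zero hE (pow_ne_zero 2 h1c)) hεne
  field_simp
  ring
end

section
/- Let f : [0,1] → [0,1] be a C^{2+|·|} unimodal map with critical point c, written on [c,1] as f = φ₊ ∘ q_c with φ₊ a C¹ diffeomorphism of [0,1]. Then the nonlinearity η_{φ₊} is integrable: ∫₀¹ |η_{φ₊}(u)| du ≤ (min(1+ε̄))⁻¹ · ∫_c¹ |δ(x)|/|x-c| dx < ∞. -/
open MeasureTheory Set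

set_option maxHeartbeats 1000000 in
/-- For a `C^{2+|·|}` unimodal map `f = φ₊ ∘ q_c` on `[c,1]`, the nonlinearity
`η_{φ₊} = D²φ₊/Dφ₊` is integrable:
`∫₀¹ |η_{φ₊}| ≤ (min(1+ε̄))⁻¹ ∫_c¹ |δ(x)|/|x-c| dx < ∞`. -/
theorem stmt11 (c E m : ℝ) (hc : c ∈ Set.Ioo (0:ℝ) 1) (hE : E ≠ 0) (hm : 0 < m)
    (φ φ' φ'' q : ℝ → ℝ) (hq : ∀ x, q x = 1 - ((x - c)/(1 - c))^2)
    (hφ : ∀ u, HasDerivAt φ (φ' u) u) (hφ' : ∀ u, HasDerivAt φ' (φ'' u) u)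
    (hφpos : ∀ u ∈ Set.Icc (0:ℝ) 1, 0 < φ' u)
    (f f' ε εbar δ : ℝ → ℝ)
    (hf : ∀ x ∈ Set.Icc c 1, f x = φ (q x))
    (hDf : ∀ x ∈ Set.Icc (0:ℝ) 1, HasDerivAt f (f' x) x)
    (hD2f : ∀ x ∈ Set.Icc (0:ℝ) 1, HasDerivAt f' (E * (1 + ε x)) x)
    (hcrit : f' c = 0)
    (hεbar : ∀ x ≠ c, εbar x = (x - c)⁻¹ * ∫ t in c..x, ε t) (hεbarc : εbar c = 0)
    (hδ : ∀ x, δ x = ε x - εbar x)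
    (hC2abs : IntervalIntegrable (fun x => |δ x| / |x - c|) MeasureTheory.volume c 1)
    (hmin : ∀ x ∈ Set.Icc c 1, m ≤ 1 + εbar x) :
    IntervalIntegrable (fun u => |φ'' u / φ' u|) MeasureTheory.volume 0 1 ∧
    (∫ u in (0:ℝ)..1, |φ'' u / φ' u|) ≤ m⁻¹ * ∫ x in c..(1:ℝ), |δ x| / |x - c| := by
  obtain ⟨hc0, hc1⟩ := hc
  set a : ℝ := 1 - c with ha_def
  have ha : 0 < a := by simp only [ha_def]; linarith
  have ha2 : (0:ℝ) < a^2 := by positivity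
  have ha1 : a ≤ 1 := by rw [ha_def]; linarith
  clear_value a
  set Q' : ℝ → ℝ := fun x => -2*(x-c)/a^2 with hQ'_def
  clear_value Q'
  have hqfun : q = fun y => 1 - ((y - c)/a)^2 := funext fun y => by rw [hq y]
  -- derivative of q
  have hq' : ∀ x, HasDerivAt q (Q' x) x := by
    intro x
    rw [hqfun]
    have h1 : HasDerivAt (fun y : ℝ => (y - c)/a) ((1:ℝ)/a) x := by
      simpa using ((hasDerivAt_id x).sub_const c).div_const a
    have h2 := h1.pow 2
    have h3 := (hasDerivAt_const x (1:ℝ)).sub h2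
    refine h3.congr_deriv ?_
    simp only [hQ'_def]
    push_cast
    rw [pow_one]
    field_simp [ha.ne']
    ring
  have hqcont : Continuous q := by
    rw [hqfun]; fun_prop
  have hψcont : Continuous fun x => φ' (q x) := by
    have : Continuous φ' := by
      rw [continuous_iff_continuousAt]
      exact fun u => (hφ' u).differentiableAt.continuousAt
    exact this.comp hqcont
  -- q maps [c,1] into [0,1]
  have hqmem : ∀ x ∈ Set.Icc c 1, q x ∈ Set.Icc (0:ℝ) 1 := by
    intro x hx
    rw [hq x]
    have h1 : 0 ≤ x - c := by linarith [hx.1]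
    have h2 : x - c ≤ a := by rw [ha_def]; linarith [hx.2]
    constructor
    · have h3 : ((x - c)/a)^2 ≤ 1 := by
        rw [div_pow, div_le_one (by positivity)]
        nlinarith
      linarith
    · nlinarith [sq_nonneg ((x-c)/a)]
  -- f' on the interior equals the chain-rule derivative
  have hfd : ∀ x ∈ Set.Ioo c 1, f' x = φ' (q x) * Q' x := by
    intro x hx
    have hcomp : HasDerivAt (fun y => φ (q y)) (φ' (q x) * Q' x) x :=
      (hφ (q x)).comp x (hq' x)
    have hev : f =ᶠ[nhds x] fun y => φ (q y) := by
      filter_upwards [isOpen_Ioo.mem_nhds hx] with y hy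
      exact hf y ⟨hy.1.le, hy.2.le⟩
    have : HasDerivAt f (φ' (q x) * Q' x) x := hcomp.congr_of_eventuallyEq hev
    exact ((hDf x ⟨by linarith [hx.1], hx.2.le⟩).unique this)
  -- second derivative identity on the interior
  have hD : ∀ x, HasDerivAt (fun y => φ' (q y) * Q' y)
      (φ'' (q x) * Q' x * Q' x + φ' (q x) * (-2/a^2)) x := by
    intro x
    have hψ : HasDerivAt (fun y => φ' (q y)) (φ'' (q x) * Q' x) x :=
      (hφ' (q x)).comp x (hq' x)
    have hQd : HasDerivAt Q' (-2/a^2) x := by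
      have : HasDerivAt (fun y : ℝ => -2*(y-c)/a^2) (-2/a^2) x := by
        have := ((hasDerivAt_id x).sub_const c).const_mul (-2)
        have h2 := this.div_const (a^2)
        refine h2.congr_deriv ?_
        ring
      rw [hQ'_def]
      exact this
    have := hψ.mul hQd
    refine this.congr_deriv ?_ <;> ring
  have hεeq : ∀ x ∈ Set.Ioo c 1,
      E * (1 + ε x) = φ'' (q x) * Q' x * Q' x + φ' (q x) * (-2/a^2) := by
    intro x hx
    have hev : f' =ᶠ[nhds x] fun y => φ' (q y) * Q' y := by
      filter_upwards [isOpen_Ioo.mem_nhds hx] with y hy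
      exact hfd y hy
    have : HasDerivAt f' (φ'' (q x) * Q' x * Q' x + φ' (q x) * (-2/a^2)) x :=
      (hD x).congr_of_eventuallyEq hev
    exact (hD2f x ⟨by linarith [hx.1], hx.2.le⟩).unique this
  -- measurability of ε on Ioc c 1
  have hεmeas : AEStronglyMeasurable ε (volume.restrict (Set.Ioc c 1)) := by
    have hmeas : AEStronglyMeasurable (fun x => deriv f' x / E - 1)
        (volume.restrict (Set.Ioc c 1)) :=
      (((measurable_deriv f').div_const E).sub_const 1).aestronglyMeasurable
    refine hmeas.congr ?_
    refine (ae_restrict_iff' measurableSet_Ioc).2 (ae_of_all _ ?_)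
    intro x hx
    have hd := (hD2f x ⟨by linarith [hx.1], hx.2⟩).deriv
    show deriv f' x / E - 1 = ε x
    rw [hd]
    field_simp
    ring
  set K : ℝ := -E * a^2/2 with hK_def
  clear_value K
  have hK0 : K ≠ 0 := by
    rw [hK_def]
    intro h
    apply hE
    have h2 : E * a ^ 2 = 0 := by linear_combination (-2 : ℝ) * h
    rcases mul_eq_zero.1 h2 with h3 | h3
    · exact h3
    · exact absurd h3 ha2.ne'
  -- FTC identity
  have hFTC : ∀ x ∈ Set.Ioo c 1, IntervalIntegrable ε volume c x →
      εbar x = φ' (q x) / K - 1 := by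
    intro x hx hint
    have hcle : c ≤ x := hx.1.le
    have h1 : (∫ t in c..x, E * (1 + ε t)) = f' x - f' c := by
      apply intervalIntegral.integral_eq_sub_of_hasDerivAt
      · intro t ht
        rw [Set.uIcc_of_le hcle] at ht
        exact hD2f t ⟨by linarith [ht.1], by linarith [ht.2, hx.2]⟩
      · have heq : (fun t => E * (1 + ε t)) = fun t => E + E * ε t := by
          funext t; ring
        rw [heq]
        exact (intervalIntegrable_const).add (hint.const_mul E)
    have h2 : (∫ t in c..x, E * (1 + ε t)) = E*(x-c) + E * ∫ t in c..x, ε t := by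
      have heq : (fun t => E * (1 + ε t)) = fun t => E + E * ε t := by
        funext t; ring
      rw [heq, intervalIntegral.integral_add (intervalIntegrable_const) (hint.const_mul E),
        intervalIntegral.integral_const, intervalIntegral.integral_const_mul]
      simp [smul_eq_mul]; ring
    have h3 : (∫ t in c..x, ε t) = f' x / E - (x - c) := by
      rw [hcrit] at h1
      have : E*(x-c) + E * ∫ t in c..x, ε t = f' x := by rw [← h2, h1]; ring
      field_simp
      linear_combination this
    have hxc : x - c ≠ 0 := ne_of_gt (by linarith [hx.1])
    rw [hεbar x (ne_of_gt hx.1), h3, hfd x hx]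
    simp only [hQ'_def, hK_def]
    field_simp [hxc, hE, ha.ne']
  -- bound on the continuous candidate for εbar
  obtain ⟨B, hB⟩ : ∃ B, ∀ x ∈ Set.Icc c 1, |φ' (q x) / K - 1| ≤ B := by
    obtain ⟨C, hC⟩ := (isCompact_Icc (a := c) (b := 1)).exists_bound_of_continuousOn
      (f := fun x => φ' (q x) / K - 1) (((hψcont.div_const K).sub continuous_const).continuousOn)
    exact ⟨C, fun x hx => by simpa [Real.norm_eq_abs] using hC x hx⟩
  set B' : ℝ := max B 0 with hB'_def
  have hεbarbd : ∀ x ∈ Set.Ioo c 1, |εbar x| ≤ B' := by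
    intro x hx
    by_cases hint : IntervalIntegrable ε volume c x
    · rw [hFTC x hx hint]
      exact le_trans (hB x ⟨hx.1.le, hx.2.le⟩) (le_max_left _ _)
    · rw [hεbar x (ne_of_gt hx.1), intervalIntegral.integral_undef hint]
      simp [hB'_def]
  -- integrability of ε on Ioc c 1
  have hδint : IntegrableOn (fun x => |δ x| / |x - c|) (Set.Ioc c 1) :=
    (intervalIntegrable_iff_integrableOn_Ioc_of_le hc1.le).1 hC2abs
  have haeIoo : ∀ᵐ x ∂(volume.restrict (Set.Ioc c 1)), x ∈ Set.Ioo c 1 := by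
    refine (ae_restrict_iff' measurableSet_Ioc).2 ?_
    have h1 : ∀ᵐ x : ℝ ∂volume, x ≠ 1 := by
      refine MeasureTheory.ae_iff.2 ?_
      simpa using Real.volume_singleton (x := (1:ℝ))
    filter_upwards [h1] with x hx1 hx
    exact ⟨hx.1, lt_of_le_of_ne hx.2 hx1⟩
  have hεint : IntegrableOn ε (Set.Ioc c 1) := by
    refine Integrable.mono' (g := fun x => |δ x| / |x - c| + B')
      (hδint.add (integrableOn_const (by simp) (by simp))) hεmeas ?_
    filter_upwards [haeIoo] with x hx
    have hxc : 0 < x - c := by linarith [hx.1]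
    have hxc1 : x - c ≤ 1 := by linarith [hx.2]
    have h1 : |δ x| ≤ |δ x| / |x - c| := by
      rw [abs_of_pos hxc, le_div_iff₀ hxc]
      nlinarith [abs_nonneg (δ x)]
    have h2 : ε x = δ x + εbar x := by rw [hδ x]; ring
    rw [Real.norm_eq_abs, h2]
    calc |δ x + εbar x| ≤ |δ x| + |εbar x| := abs_add_le _ _
      _ ≤ |δ x| / |x - c| + B' := add_le_add h1 (hεbarbd x hx)
  have hεint' : ∀ x ∈ Set.Ioo c 1, IntervalIntegrable ε volume c x := by
    intro x hx
    exact (intervalIntegrable_iff_integrableOn_Ioc_of_le hx.1.le).2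
      (hεint.mono_set (Set.Ioc_subset_Ioc_right hx.2.le))
  have hεbar_all : ∀ x ∈ Set.Ioo c 1, εbar x = φ' (q x) / K - 1 :=
    fun x hx => hFTC x hx (hεint' x hx)
  -- K is positive
  have hKpos : 0 < K := by
    have hx0 : (c+1)/2 ∈ Set.Ioo c 1 := ⟨by linarith, by linarith⟩
    have h1 := hεbar_all _ hx0
    have h2 := hmin _ ⟨hx0.1.le, hx0.2.le⟩
    have h3 := hφpos _ (hqmem _ ⟨hx0.1.le, hx0.2.le⟩)
    have h7 : 0 < φ' (q ((c+1)/2)) / K := by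
      rw [h1] at h2
      linarith
    by_contra hK'
    push_neg at hK'
    have h8 : φ' (q ((c+1)/2)) / K ≤ 0 := div_nonpos_iff.2 (Or.inl ⟨h3.le, hK'⟩)
    linarith
  have hEneg : E < 0 := by
    simp only [hK_def] at hKpos
    nlinarith
  -- δ identity on the interior
  have hδE : ∀ x ∈ Set.Ioo c 1, E * δ x = φ'' (q x) * (Q' x)^2 := by
    intro x hx
    have h1 := hεeq x hx
    have h2 := hεbar_all x hx
    rw [hδ x, h2]
    have hpK : E * (φ' (q x) / K) = φ' (q x) * (-2/a^2) := by
      rw [hK_def]; field_simp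
    linear_combination h1 - hpK
  -- key pointwise bound
  have hkey : ∀ x ∈ Set.Ioo c 1,
      |Q' x| * |φ'' (q x) / φ' (q x)| ≤ m⁻¹ * (|δ x| / |x - c|) := by
    intro x hx
    have hxm : x ∈ Set.Icc c 1 := ⟨hx.1.le, hx.2.le⟩
    have hφp := hφpos _ (hqmem x hxm)
    have hme := hmin x hxm
    have hεb := hεbar_all x hx
    have hφeq : φ' (q x) = K * (1 + εbar x) := by
      rw [hεb]
      field_simp
      ring
    have hpx : 0 < x - c := by linarith [hx.1]
    set P : ℝ := |φ'' (q x)| with hP_def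
    have hP : 0 ≤ P := abs_nonneg _
    have hQabs : |Q' x| = 2*(x-c)/a^2 := by
      simp only [hQ'_def]
      rw [abs_div, abs_of_pos ha2, abs_of_nonpos (by nlinarith : -2*(x-c) ≤ 0)]
      ring
    have h1p : 0 < 1 + εbar x := lt_of_lt_of_le hm hme
    have hLHS : |Q' x| * |φ'' (q x) / φ' (q x)|
        = (2*(x-c)*P/(a^2*K)) * (1 + εbar x)⁻¹ := by
      rw [hQabs, abs_div, abs_of_pos hφp, hφeq, ← hP_def]
      simp only [div_eq_mul_inv, mul_inv]
      ring
    have hRHS : m⁻¹ * (|δ x| / |x - c|) = (2*(x-c)*P/(a^2*K)) * m⁻¹ := by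
      have habs : |E * δ x| = P * (Q' x)^2 := by
        rw [hδE x hx, abs_mul, abs_of_nonneg (sq_nonneg (Q' x)), ← hP_def]
      have hdabs : |δ x| = P * (Q' x)^2 / (-E) := by
        rw [abs_mul, abs_of_neg hEneg] at habs
        rw [eq_div_iff (by linarith : -E ≠ 0)]
        linear_combination habs
      rw [hdabs, abs_of_pos hpx]
      have hEK : E = -2*K/a^2 := by rw [hK_def]; field_simp
      rw [hEK]
      simp only [hQ'_def]
      field_simp [ha.ne', hKpos.ne', hm.ne', hpx.ne']
    rw [hLHS, hRHS]
    refine mul_le_mul_of_nonneg_left ?_ (by positivity)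
    exact inv_anti₀ hm hme
  -- change of variables
  have himg : q '' (Set.Ioo c 1) = Set.Ioo 0 1 := by
    ext u
    constructor
    · rintro ⟨x, hx, rfl⟩
      rw [hq x]
      have h1 : 0 < x - c := by linarith [hx.1]
      have h2 : x - c < a := by rw [ha_def]; linarith [hx.2]
      constructor
      · have h3 : ((x-c)/a)^2 < 1 := by
          rw [div_pow, div_lt_one (by positivity)]
          nlinarith
        linarith
      · have h4 : 0 < ((x-c)/a)^2 := by positivity
        linarith
    · intro hu
      refine ⟨c + a * Real.sqrt (1 - u), ?_, ?_⟩
      · have hs0 : 0 < Real.sqrt (1 - u) := Real.sqrt_pos.2 (by linarith [hu.2])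
        have hs1 : Real.sqrt (1 - u) < 1 := by
          have := Real.sqrt_lt_sqrt (by linarith [hu.2]) (by linarith [hu.1] : 1 - u < 1)
          simpa using this
        constructor
        · nlinarith
        · have h4 : a * Real.sqrt (1 - u) < a * 1 := by nlinarith
          have h5 : a = 1 - c := ha_def
          linarith
      · rw [hq]
        have h3 : (c + a * Real.sqrt (1 - u) - c) / a = Real.sqrt (1 - u) := by
          field_simp
          ring
        rw [h3, Real.sq_sqrt (by linarith [hu.2])]
        ring
  have hinj : Set.InjOn q (Set.Ioo c 1) := by
    intro x hx y hy hxy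
    rw [hq x, hq y] at hxy
    have h1 : ((x-c)/a)^2 = ((y-c)/a)^2 := by linarith
    have ha' : a^2 ≠ 0 := ha2.ne'
    have h2' : ((x-c)/a)^2 * a^2 = ((y-c)/a)^2 * a^2 := by rw [h1]
    have h2 : (x-c)^2 = (y-c)^2 := by
      rw [div_pow, div_pow, div_mul_cancel₀ _ ha', div_mul_cancel₀ _ ha'] at h2'
      exact h2'
    have h3 : (x - y) * (x + y - 2*c) = 0 := by nlinarith
    rcases mul_eq_zero.1 h3 with h | h
    · linarith
    · nlinarith [hx.1, hy.1]
  have hds : ∀ x ∈ Set.Ioo c 1, HasDerivWithinAt q (Q' x) (Set.Ioo c 1) x :=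
    fun x _ => (hq' x).hasDerivWithinAt
  set g : ℝ → ℝ := fun u => |φ'' u / φ' u| with hg_def
  have hcov_eq : ∫ u in Set.Ioo (0:ℝ) 1, g u = ∫ x in Set.Ioo c 1, |Q' x| • g (q x) := by
    rw [← himg]
    exact integral_image_eq_integral_abs_deriv_smul measurableSet_Ioo hds hinj g
  have hcov_iff := integrableOn_image_iff_integrableOn_abs_deriv_smul
    measurableSet_Ioo hds hinj g
  rw [himg] at hcov_iff
  -- integrability of the composed function
  have hφ''meas : Measurable φ'' := by
    have : φ'' = deriv φ' := funext fun u => ((hφ' u).deriv).symm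
    rw [this]; exact measurable_deriv _
  have hmeas2 : AEStronglyMeasurable (fun x => |Q' x| • g (q x))
      (volume.restrict (Set.Ioo c 1)) := by
    simp only [hg_def, smul_eq_mul]
    have hQc : Continuous fun x => |Q' x| := by
      simp only [hQ'_def]; fun_prop
    exact (hQc.measurable.mul
      (((hφ''meas.comp hqcont.measurable).div hψcont.measurable).abs)).aestronglyMeasurable
  have hrhs_int : IntegrableOn (fun x => m⁻¹ * (|δ x| / |x - c|)) (Set.Ioo c 1) :=
    (hδint.mono_set Set.Ioo_subset_Ioc_self).const_mul m⁻¹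
  have hcomp_int : IntegrableOn (fun x => |Q' x| • g (q x)) (Set.Ioo c 1) := by
    refine Integrable.mono' hrhs_int hmeas2 ?_
    refine (ae_restrict_iff' measurableSet_Ioo).2 (ae_of_all _ ?_)
    intro x hx
    have := hkey x hx
    simp only [hg_def, smul_eq_mul, Real.norm_eq_abs]
    rw [abs_of_nonneg (by positivity : (0:ℝ) ≤ |Q' x| * |φ'' (q x) / φ' (q x)|)]
    exact this
  have hg_int : IntegrableOn g (Set.Ioo (0:ℝ) 1) := hcov_iff.2 hcomp_int
  have hg_int' : IntegrableOn g (Set.Ioc (0:ℝ) 1) :=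
    hg_int.congr_set_ae (MeasureTheory.Ioo_ae_eq_Ioc (a := (0:ℝ)) (b := 1)).symm
  constructor
  · exact (intervalIntegrable_iff_integrableOn_Ioc_of_le zero_le_one).2 hg_int'
  · have step1 : (∫ u in (0:ℝ)..1, g u) = ∫ u in Set.Ioo (0:ℝ) 1, g u := by
      rw [intervalIntegral.integral_of_le zero_le_one, integral_Ioc_eq_integral_Ioo]
    have step2 : (∫ x in Set.Ioo c 1, |Q' x| • g (q x))
        ≤ ∫ x in Set.Ioo c 1, m⁻¹ * (|δ x| / |x - c|) := by
      refine setIntegral_mono_on hcomp_int hrhs_int measurableSet_Ioo ?_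
      intro x hx
      simpa [smul_eq_mul] using hkey x hx
    have step3 : (∫ x in Set.Ioo c 1, m⁻¹ * (|δ x| / |x - c|))
        = m⁻¹ * ∫ x in c..(1:ℝ), |δ x| / |x - c| := by
      rw [intervalIntegral.integral_of_le hc1.le, integral_Ioc_eq_integral_Ioo,
        MeasureTheory.integral_const_mul]
    calc (∫ u in (0:ℝ)..1, g u) = ∫ u in Set.Ioo (0:ℝ) 1, g u := step1
      _ = ∫ x in Set.Ioo c 1, |Q' x| • g (q x) := hcov_eq
      _ ≤ ∫ x in Set.Ioo c 1, m⁻¹ * (|δ x| / |x - c|) := step2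
      _ = m⁻¹ * ∫ x in c..(1:ℝ), |δ x| / |x - c| := step3
end
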